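/- (First derivative bound for the eigenvector, eigenvalue 0 case.) Let d ≥ 1 and λ > 0. Let H : ℝ → Matrix (Fin d) (Fin d) ℂ be differentiable on [0,1] with each H(s) Hermitian, and let Ψ : ℝ → EuclideanSpace ℂ (Fin d) be differentiable on [0,1] with ‖Ψ(s)‖ = 1, H(s) Ψ(s) = 0, and ⟨Ψ'(s), Ψ(s)⟩ = 0 for all s ∈ [0,1]. Assume that for every s ∈ [0,1] the kernel of H(s) is spanned by Ψ(s) and every nonzero eigenvalue μ of H(s) satisfies |μ| ≥ λ. Then for every s ∈ [0,1], ‖Ψ'(s)‖ ≤ ‖H'(s)‖ / λ. -/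

import Mathlib

open scoped InnerProductSpace

/-- The continuous linear map on Euclidean space associated to a matrix;
its operator norm is the operator norm induced by the Euclidean norm. -/
noncomputable def opCLM {d : ℕ} (A : Matrix (Fin d) (Fin d) ℂ) :
    EuclideanSpace ℂ (Fin d) →L[ℂ] EuclideanSpace ℂ (Fin d) :=
  Matrix.toEuclideanCLM (𝕜 := ℂ) A

lemma opCLM_eigen {d : ℕ} {A : Matrix (Fin d) (Fin d) ℂ} (hA : A.IsHermitian) (j : Fin d) :
    opCLM A (hA.eigenvectorBasis j) = ((hA.eigenvalues j : ℂ)) • hA.eigenvectorBasis j := by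
  unfold opCLM
  have h := Matrix.ofLp_toEuclideanCLM (𝕜 := ℂ) A (hA.eigenvectorBasis j)
  apply (WithLp.equiv 2 _).injective
  show WithLp.ofLp (Matrix.toEuclideanCLM (𝕜 := ℂ) A (hA.eigenvectorBasis j)) =
    WithLp.ofLp ((hA.eigenvalues j : ℂ) • hA.eigenvectorBasis j)
  rw [h]
  have h2 := hA.mulVec_eigenvectorBasis j
  ext i
  simp only [Matrix.toLin'_apply]
  have : Matrix.mulVec A (WithLp.ofLp (hA.eigenvectorBasis j)) i
      = (hA.eigenvalues j • ⇑(hA.eigenvectorBasis j)) i := by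
    rw [← h2]
  rw [this]
  simp only [Pi.smul_apply]
  show hA.eigenvalues j • hA.eigenvectorBasis j i = ((hA.eigenvalues j : ℂ) • hA.eigenvectorBasis j) i
  rw [PiLp.smul_apply, Complex.real_smul, smul_eq_mul]

lemma opCLM_selfAdjoint {d : ℕ} {A : Matrix (Fin d) (Fin d) ℂ} (hA : A.IsHermitian) :
    IsSelfAdjoint (opCLM A) := by
  unfold opCLM
  rw [IsSelfAdjoint, ← map_star]
  congr 1

/-- **First derivative bound for the eigenvector, eigenvalue 0 case.** -/
theorem eigenvector_first_deriv_bound {d : ℕ} (hd : 1 ≤ d) (lam : ℝ) (hlam : 0 < lam)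
    (H H' : ℝ → Matrix (Fin d) (Fin d) ℂ)
    (hHd : ∀ s ∈ Set.Icc (0:ℝ) 1, HasDerivAt (fun t => opCLM (H t)) (opCLM (H' s)) s)
    (hherm : ∀ s ∈ Set.Icc (0:ℝ) 1, (H s).IsHermitian)
    (Ψ Ψ' : ℝ → EuclideanSpace ℂ (Fin d))
    (hΨd : ∀ s ∈ Set.Icc (0:ℝ) 1, HasDerivAt Ψ (Ψ' s) s)
    (hΨnorm : ∀ s ∈ Set.Icc (0:ℝ) 1, ‖Ψ s‖ = 1)
    (heig : ∀ s ∈ Set.Icc (0:ℝ) 1, opCLM (H s) (Ψ s) = 0)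
    (hphase : ∀ s ∈ Set.Icc (0:ℝ) 1, ⟪Ψ' s, Ψ s⟫_ℂ = 0)
    (hker : ∀ s ∈ Set.Icc (0:ℝ) 1, ∀ v : EuclideanSpace ℂ (Fin d),
      opCLM (H s) v = 0 → ∃ c : ℂ, v = c • Ψ s)
    (hgap : ∀ s ∈ Set.Icc (0:ℝ) 1, ∀ (μ : ℂ) (v : EuclideanSpace ℂ (Fin d)), v ≠ 0 →
      opCLM (H s) v = μ • v → μ ≠ 0 → lam ≤ ‖μ‖) :
    ∀ s ∈ Set.Icc (0:ℝ) 1, ‖Ψ' s‖ ≤ ‖opCLM (H' s)‖ / lam := by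
  intro s hs
  set T := opCLM (H s) with hT
  have hA := hherm s hs
  set b := hA.eigenvectorBasis with hb
  set μ := hA.eigenvalues with hμ
  -- Step 1: derivative of H(s)Ψ(s) = 0 gives T (Ψ' s) = -(opCLM (H' s)) (Ψ s)
  have hres : HasDerivAt (fun t => (opCLM (H t)).restrictScalars ℝ)
      ((opCLM (H' s)).restrictScalars ℝ) s := by
    exact (ContinuousLinearMap.restrictScalarsL ℂ (EuclideanSpace ℂ (Fin d))
      (EuclideanSpace ℂ (Fin d)) ℝ ℝ).hasFDerivAt.comp_hasDerivAt s (hHd s hs)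
  have hprod : HasDerivWithinAt (fun t => opCLM (H t) (Ψ t))
      (opCLM (H' s) (Ψ s) + opCLM (H s) (Ψ' s)) (Set.Icc 0 1) s :=
    (hres.clm_apply (hΨd s hs)).hasDerivWithinAt
  have hzero : HasDerivWithinAt (fun t => opCLM (H t) (Ψ t)) 0 (Set.Icc (0:ℝ) 1) s := by
    refine (hasDerivWithinAt_const s _ (0 : EuclideanSpace ℂ (Fin d))).congr ?_ (heig s hs)
    intro t ht; exact heig t ht
  have hud : UniqueDiffWithinAt ℝ (Set.Icc (0:ℝ) 1) s := uniqueDiffOn_Icc_zero_one s hs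
  have hsum : opCLM (H' s) (Ψ s) + opCLM (H s) (Ψ' s) = 0 := by
    rw [← hprod.derivWithin hud, ← hzero.derivWithin hud]
  have hTΨ' : T (Ψ' s) = -(opCLM (H' s) (Ψ s)) := by
    rw [hT]; linear_combination (norm := module) hsum
  -- Step 2: lam * ‖Ψ' s‖ ≤ ‖T (Ψ' s)‖
  have hsa := opCLM_selfAdjoint hA
  have hadj : ContinuousLinearMap.adjoint T = T :=
    (ContinuousLinearMap.isSelfAdjoint_iff'.mp hsa)
  have hrepr : ∀ x : EuclideanSpace ℂ (Fin d), ∀ i,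
      b.repr (T x) i = (μ i : ℂ) * b.repr x i := by
    intro x i
    rw [b.repr_apply_apply, b.repr_apply_apply]
    have : ⟪b i, T x⟫_ℂ = ⟪T (b i), x⟫_ℂ := by
      conv_rhs => rw [← hadj]
      rw [ContinuousLinearMap.adjoint_inner_left]
    rw [this, opCLM_eigen hA i, inner_smul_left]
    simp
    rfl
  have hcoef : ∀ i, lam ^ 2 * ‖b.repr (Ψ' s) i‖ ^ 2 ≤ ‖b.repr (T (Ψ' s)) i‖ ^ 2 := by
    intro i
    rw [hrepr]
    by_cases h0 : (μ i : ℂ) = 0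
    · -- b i is in the kernel, hence proportional to Ψ s, hence ⟪b i, Ψ' s⟫ = 0
      have hbker : T (b i) = 0 := by
        rw [opCLM_eigen hA i, h0, zero_smul]
      obtain ⟨c, hc⟩ := hker s hs (b i) hbker
      have : b.repr (Ψ' s) i = 0 := by
        rw [b.repr_apply_apply, hc, inner_smul_left]
        have : ⟪Ψ s, Ψ' s⟫_ℂ = 0 := by
          rw [← inner_conj_symm, hphase s hs, map_zero]
        rw [this, mul_zero]
      rw [this]
      simp
    · have hbne : b i ≠ 0 := by
        intro h
        have := b.orthonormal.1 i
        rw [h, norm_zero] at this; norm_num at this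
      have hl := hgap s hs (μ i : ℂ) (b i) hbne (opCLM_eigen hA i) h0
      have habs : ‖(μ i : ℂ)‖ = |μ i| := by
        rw [Complex.norm_real, Real.norm_eq_abs]
      rw [habs] at hl
      have h1 : lam ^ 2 ≤ |μ i| ^ 2 := by
        have := sq_le_sq' (by linarith [abs_nonneg (μ i)]) hl
        nlinarith [abs_nonneg (μ i)]
      have h2 : ‖(μ i : ℂ) * b.repr (Ψ' s) i‖ ^ 2 = |μ i| ^ 2 * ‖b.repr (Ψ' s) i‖ ^ 2 := by
        rw [norm_mul, mul_pow, Complex.norm_real, Real.norm_eq_abs]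
      rw [h2]
      nlinarith [norm_nonneg (b.repr (Ψ' s) i), sq_nonneg (‖b.repr (Ψ' s) i‖)]
  have hnormsq : ∀ x : EuclideanSpace ℂ (Fin d), ‖x‖ ^ 2 = ∑ i, ‖b.repr x i‖ ^ 2 := by
    intro x
    rw [← b.repr.norm_map x]
    exact PiLp.norm_sq_eq_of_L2 _ (b.repr x)
  have hsq : (lam * ‖Ψ' s‖) ^ 2 ≤ ‖T (Ψ' s)‖ ^ 2 := by
    rw [mul_pow, hnormsq (Ψ' s), hnormsq (T (Ψ' s)), Finset.mul_sum]
    exact Finset.sum_le_sum fun i _ => hcoef i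
  have hkey : lam * ‖Ψ' s‖ ≤ ‖T (Ψ' s)‖ := by
    have h := hsq
    nlinarith [norm_nonneg (T (Ψ' s)), mul_nonneg hlam.le (norm_nonneg (Ψ' s))]
  -- Step 3: ‖T (Ψ' s)‖ ≤ ‖opCLM (H' s)‖
  have hfinal : ‖T (Ψ' s)‖ ≤ ‖opCLM (H' s)‖ := by
    rw [hTΨ', norm_neg]
    calc ‖opCLM (H' s) (Ψ s)‖ ≤ ‖opCLM (H' s)‖ * ‖Ψ s‖ := (opCLM (H' s)).le_opNorm _
    _ = ‖opCLM (H' s)‖ := by rw [hΨnorm s hs, mul_one]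
  rw [le_div_iff₀ hlam, mul_comm]
  linarith
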